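/- Define φ_ℓ(z) := ∫_{−1}^{1} P_ℓ(y)/(y+z) dy for z > 1. For every odd positive integer ℓ: (a) the map z ↦ φ_ℓ(z) is strictly monotone increasing on (1, +∞) and φ_ℓ(z) < 0 there; (b) |φ_ℓ(z)| ≤ 2^{−ℓ} ( ∫_{−1}^{1} (1−y²)^ℓ dy ) / (z−1)^{ℓ+1} for all z > 1; (c) lim_{z→+∞} (z−1)^{ℓ+1} φ_ℓ(z) = −2^{−ℓ} ∫_{−1}^{1} (1−y²)^ℓ dy. -/

import Mathlib

noncomputable section

open Polynomial intervalIntegral Set MeasureTheory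

noncomputable section

lemma iteratedDeriv_poly (n : ℕ) (p : ℝ[X]) :
    iteratedDeriv n (fun t : ℝ => p.eval t) = fun x => (Polynomial.derivative^[n] p).eval x := by
  induction n with
  | zero => simp
  | succ n ih =>
    rw [iteratedDeriv_succ, ih]
    funext x
    rw [Function.iterate_succ_apply']
    exact Polynomial.deriv (p := Polynomial.derivative^[n] p)

lemma eval_iter_deriv_zero (l m : ℕ) (hm : m < l) (a : ℝ) (ha : a ^ 2 = 1) :
    (Polynomial.derivative^[m] ((X ^ 2 - 1 : ℝ[X]) ^ l)).eval a = 0 := by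
  obtain ⟨q, hq⟩ := Polynomial.pow_sub_dvd_iterate_derivative_pow (X ^ 2 - 1 : ℝ[X]) l m
  rw [hq]
  have hlm : l - m ≠ 0 := Nat.sub_ne_zero_of_lt hm
  simp [ha, zero_pow hlm]

def auxH (z : ℝ) (k : ℕ) (y : ℝ) : ℝ := (-1 : ℝ) ^ k * (Nat.factorial k : ℝ) * ((y + z) ^ (k + 1))⁻¹

lemma auxH_hasDerivAt (z : ℝ) (k : ℕ) (y : ℝ) (hy : y + z ≠ 0) :
    HasDerivAt (auxH z k) (auxH z (k + 1) y) y := by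
  have h1 : HasDerivAt (fun y : ℝ => ((y + z) ^ (k + 1))⁻¹)
      (-(((k : ℝ) + 1) * (y + z) ^ k * 1) / ((y + z) ^ (k + 1)) ^ 2) y := by
    have h := (((hasDerivAt_id y).add_const z).pow (k + 1)).inv (pow_ne_zero _ hy)
    simpa [Pi.pow_def, Pi.inv_def] using h
  have h2 := h1.const_mul ((-1 : ℝ) ^ k * (Nat.factorial k : ℝ))
  refine h2.congr_deriv ?_
  unfold auxH
  rw [Nat.factorial_succ]
  push_cast
  field_simp
  ring

lemma contOn_auxH (z : ℝ) (hz : 1 < z) (k : ℕ) :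
    ContinuousOn (auxH z k) (Set.Icc (-1 : ℝ) 1) := by
  apply ContinuousOn.mul continuousOn_const
  apply ContinuousOn.inv₀
  · exact ((continuous_id.add continuous_const).pow _).continuousOn
  · intro x hx
    exact pow_ne_zero _ (by have := hx.1; simp only [Set.mem_Icc] at hx; linarith)

lemma intInt_auxH (z : ℝ) (hz : 1 < z) (k : ℕ) :
    IntervalIntegrable (auxH z k) volume (-1 : ℝ) 1 := by
  apply ContinuousOn.intervalIntegrable
  rw [Set.uIcc_of_le (by norm_num : (-1:ℝ) ≤ 1)]
  exact contOn_auxH z hz k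

lemma ibp (l : ℕ) (z : ℝ) (hz : 1 < z) : ∀ k, k ≤ l →
    (∫ y in (-1 : ℝ)..1, (Polynomial.derivative^[l] ((X ^ 2 - 1 : ℝ[X]) ^ l)).eval y * auxH z 0 y)
    = (-1 : ℝ) ^ k *
      ∫ y in (-1 : ℝ)..1, (Polynomial.derivative^[l - k] ((X ^ 2 - 1 : ℝ[X]) ^ l)).eval y *
        auxH z k y := by
  intro k
  induction k with
  | zero => simp
  | succ k ih =>
    intro hk
    have hkl : k < l := hk
    rw [ih hkl.le]
    have hmem : ∀ x ∈ Set.uIcc (-1 : ℝ) 1, x + z ≠ 0 := by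
      intro x hx
      rw [Set.uIcc_of_le (by norm_num)] at hx
      have := hx.1
      simp only [Set.mem_Icc] at hx
      linarith [hx.1]
    have key : (∫ y in (-1 : ℝ)..1,
        (Polynomial.derivative^[l - k] ((X ^ 2 - 1 : ℝ[X]) ^ l)).eval y * auxH z k y)
        = - ∫ y in (-1 : ℝ)..1,
          (Polynomial.derivative^[l - (k + 1)] ((X ^ 2 - 1 : ℝ[X]) ^ l)).eval y *
            auxH z (k + 1) y := by
      have hsucc : l - k = (l - (k + 1)) + 1 := by omega
      have hibp := intervalIntegral.integral_mul_deriv_eq_deriv_mul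
        (u := auxH z k) (u' := auxH z (k + 1))
        (v := fun y => (Polynomial.derivative^[l - (k + 1)] ((X ^ 2 - 1 : ℝ[X]) ^ l)).eval y)
        (v' := fun y => (Polynomial.derivative^[l - k] ((X ^ 2 - 1 : ℝ[X]) ^ l)).eval y)
        (a := (-1 : ℝ)) (b := 1)
        (fun x hx => auxH_hasDerivAt z k x (hmem x hx))
        (fun x hx => by
          rw [hsucc, Function.iterate_succ_apply']
          exact Polynomial.hasDerivAt _ x)
        (intInt_auxH z hz (k + 1))
        (by
          apply Continuous.intervalIntegrable
          exact Polynomial.continuous _)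
      have hb1 : (Polynomial.derivative^[l - (k + 1)] ((X ^ 2 - 1 : ℝ[X]) ^ l)).eval 1 = 0 :=
        eval_iter_deriv_zero l _ (by omega) 1 (by norm_num)
      have hb2 : (Polynomial.derivative^[l - (k + 1)] ((X ^ 2 - 1 : ℝ[X]) ^ l)).eval (-1) = 0 :=
        eval_iter_deriv_zero l _ (by omega) (-1) (by norm_num)
      simp only [hb1, hb2, mul_zero, zero_sub, zero_mul, sub_zero] at hibp
      simp_rw [mul_comm (auxH z k _)] at hibp
      rw [hibp]
      congr 1
      apply intervalIntegral.integral_congr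
      intro y hy
      exact mul_comm _ _
    rw [key]
    ring

/-- The `ℓ`-th Legendre polynomial via the Rodrigues formula. -/
def legendreP (l : ℕ) (y : ℝ) : ℝ :=
  (1 / ((2 : ℝ) ^ l * (Nat.factorial l : ℝ))) *
    iteratedDeriv l (fun t : ℝ => (t ^ 2 - 1) ^ l) y

/-- `φ_ℓ(z) = ∫_{−1}^{1} P_ℓ(y)/(y+z) dy` for `z > 1`. -/
def phiL (l : ℕ) (z : ℝ) : ℝ :=
  ∫ y in (-1 : ℝ)..1, legendreP l y / (y + z)


lemma phiL_eq (l : ℕ) (hodd : Odd l) (z : ℝ) (hz : 1 < z) :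
    phiL l z = -((1 / 2 ^ l) * ∫ y in (-1 : ℝ)..1, (1 - y ^ 2) ^ l * ((y + z) ^ (l + 1))⁻¹) := by
  have hfun : (fun t : ℝ => (t ^ 2 - 1) ^ l) = fun t : ℝ => ((X ^ 2 - 1 : ℝ[X]) ^ l).eval t := by
    funext t; simp
  have hleg : ∀ y : ℝ, legendreP l y = (1 / ((2 : ℝ) ^ l * (Nat.factorial l : ℝ))) *
      (Polynomial.derivative^[l] ((X ^ 2 - 1 : ℝ[X]) ^ l)).eval y := by
    intro y
    rw [legendreP, hfun, iteratedDeriv_poly]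
  have h1 : phiL l z = (1 / ((2 : ℝ) ^ l * (Nat.factorial l : ℝ))) *
      ∫ y in (-1 : ℝ)..1,
        (Polynomial.derivative^[l] ((X ^ 2 - 1 : ℝ[X]) ^ l)).eval y * auxH z 0 y := by
    rw [phiL, ← intervalIntegral.integral_const_mul]
    apply intervalIntegral.integral_congr
    intro y hy
    simp only
    rw [hleg y, auxH]
    simp [div_eq_mul_inv]
    ring
  rw [h1, ibp l z hz l le_rfl]
  simp only [Nat.sub_self, Function.iterate_zero, id_eq]
  have h2 : ∀ y : ℝ, ((X ^ 2 - 1 : ℝ[X]) ^ l).eval y * auxH z l y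
      = (-1 : ℝ) ^ l * ((Nat.factorial l : ℝ) * (-(((1 - y ^ 2) ^ l) * ((y + z) ^ (l + 1))⁻¹))) := by
    intro y
    rw [auxH]
    have : (y ^ 2 - 1 : ℝ) ^ l = -((1 - y ^ 2) ^ l) := by
      rw [show (y ^ 2 - 1 : ℝ) = -(1 - y ^ 2) by ring, Odd.neg_pow hodd]
    simp only [Polynomial.eval_pow, Polynomial.eval_sub, Polynomial.eval_one,
      Polynomial.eval_X, this]
    ring
  rw [intervalIntegral.integral_congr (g := fun y =>
      (-1 : ℝ) ^ l * ((Nat.factorial l : ℝ) * (-(((1 - y ^ 2) ^ l) * ((y + z) ^ (l + 1))⁻¹))))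
      (fun y _ => h2 y)]
  rw [intervalIntegral.integral_const_mul, intervalIntegral.integral_const_mul,
    intervalIntegral.integral_neg]
  have hfac : (Nat.factorial l : ℝ) ≠ 0 := Nat.cast_ne_zero.mpr (Nat.factorial_ne_zero l)
  rw [Odd.neg_one_pow hodd]
  have h2l : ((2 : ℝ) ^ l) ≠ 0 := by positivity
  field_simp

lemma contOn_integrand (l : ℕ) (z : ℝ) (hz : 1 < z) :
    ContinuousOn (fun y : ℝ => (1 - y ^ 2) ^ l * ((y + z) ^ (l + 1))⁻¹) (Set.Icc (-1 : ℝ) 1) := by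
  apply ContinuousOn.mul ((continuous_const.sub (continuous_pow 2)).pow l).continuousOn
  apply ContinuousOn.inv₀ ((continuous_id.add continuous_const).pow _).continuousOn
  intro x hx
  simp only [Set.mem_Icc] at hx
  have h0 : (0 : ℝ) < x + z := by linarith [hx.1]
  exact pow_ne_zero _ (by simpa using h0.ne')

lemma intInt_integrand (l : ℕ) (z : ℝ) (hz : 1 < z) :
    IntervalIntegrable (fun y : ℝ => (1 - y ^ 2) ^ l * ((y + z) ^ (l + 1))⁻¹) volume (-1 : ℝ) 1 := by
  apply ContinuousOn.intervalIntegrable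
  rw [Set.uIcc_of_le (by norm_num : (-1 : ℝ) ≤ 1)]
  exact contOn_integrand l z hz

lemma intInt_base (l : ℕ) (c : ℝ) :
    IntervalIntegrable (fun y : ℝ => (1 - y ^ 2) ^ l * c) volume (-1 : ℝ) 1 :=
  (((continuous_const.sub (continuous_pow 2)).pow l).mul continuous_const).intervalIntegrable _ _

lemma psi_lt (l : ℕ) {z₁ z₂ : ℝ} (h1 : 1 < z₁) (h12 : z₁ < z₂) :
    (∫ y in (-1 : ℝ)..1, (1 - y ^ 2) ^ l * ((y + z₂) ^ (l + 1))⁻¹)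
    < ∫ y in (-1 : ℝ)..1, (1 - y ^ 2) ^ l * ((y + z₁) ^ (l + 1))⁻¹ := by
  have h2 : 1 < z₂ := h1.trans h12
  apply intervalIntegral.integral_lt_integral_of_continuousOn_of_le_of_exists_lt
    (by norm_num) (contOn_integrand l z₂ h2) (contOn_integrand l z₁ h1)
  · intro x hx
    simp only [Set.mem_Ioc] at hx
    have hx2 : x ^ 2 ≤ 1 := by nlinarith [hx.1, hx.2]
    have hb : (0 : ℝ) ≤ (1 - x ^ 2) ^ l := pow_nonneg (by linarith) l
    apply mul_le_mul_of_nonneg_left _ hb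
    have hp1 : (0 : ℝ) < x + z₁ := by linarith [hx.1]
    exact inv_anti₀ (pow_pos hp1 _) (pow_le_pow_left₀ hp1.le (by linarith) _)
  · refine ⟨0, by norm_num, ?_⟩
    norm_num
    have hz1 : (0 : ℝ) < z₁ := by linarith
    exact inv_strictAnti₀ (pow_pos hz1 _) (pow_lt_pow_left₀ h12 hz1.le (by omega))

lemma psi_pos (l : ℕ) {z : ℝ} (hz : 1 < z) :
    0 < ∫ y in (-1 : ℝ)..1, (1 - y ^ 2) ^ l * ((y + z) ^ (l + 1))⁻¹ := by
  apply intervalIntegral.integral_pos (by norm_num) (contOn_integrand l z hz)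
  · intro x hx
    simp only [Set.mem_Ioc] at hx
    have hx2 : x ^ 2 ≤ 1 := by nlinarith [hx.1, hx.2]
    have h0 : (0 : ℝ) < x + z := by linarith [hx.1]
    exact mul_nonneg (pow_nonneg (by linarith) l) (inv_nonneg.mpr (pow_pos h0 _).le)
  · refine ⟨0, by norm_num, ?_⟩
    norm_num
    have h0 : (0 : ℝ) < z := by linarith
    exact pow_pos h0 _

lemma C_pos (l : ℕ) : 0 < ∫ y in (-1 : ℝ)..1, (1 - y ^ 2) ^ l := by
  apply intervalIntegral.integral_pos (by norm_num)
    ((continuous_const.sub (continuous_pow 2)).pow l).continuousOn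
  · intro x hx
    simp only [Set.mem_Ioc] at hx
    have hx2 : x ^ 2 ≤ 1 := by nlinarith [hx.1, hx.2]
    exact pow_nonneg (by show (0:ℝ) ≤ 1 - x ^ 2; linarith) l
  · exact ⟨0, by norm_num, by norm_num⟩

lemma psi_le (l : ℕ) {z : ℝ} (hz : 1 < z) :
    (∫ y in (-1 : ℝ)..1, (1 - y ^ 2) ^ l * ((y + z) ^ (l + 1))⁻¹)
    ≤ (∫ y in (-1 : ℝ)..1, (1 - y ^ 2) ^ l) * ((z - 1) ^ (l + 1))⁻¹ := by
  rw [← intervalIntegral.integral_mul_const]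
  apply intervalIntegral.integral_mono_on (by norm_num) (intInt_integrand l z hz) (intInt_base l _)
  intro x hx
  simp only [Set.mem_Icc] at hx
  have hx2 : x ^ 2 ≤ 1 := by nlinarith [hx.1, hx.2]
  have hb : (0 : ℝ) ≤ (1 - x ^ 2) ^ l := pow_nonneg (by linarith) l
  apply mul_le_mul_of_nonneg_left _ hb
  have h0 : (0 : ℝ) < z - 1 := by linarith
  exact inv_anti₀ (pow_pos h0 _) (pow_le_pow_left₀ h0.le (by linarith [hx.1]) _)

lemma psi_ge (l : ℕ) {z : ℝ} (hz : 1 < z) :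
    (∫ y in (-1 : ℝ)..1, (1 - y ^ 2) ^ l) * ((z + 1) ^ (l + 1))⁻¹
    ≤ ∫ y in (-1 : ℝ)..1, (1 - y ^ 2) ^ l * ((y + z) ^ (l + 1))⁻¹ := by
  rw [← intervalIntegral.integral_mul_const]
  apply intervalIntegral.integral_mono_on (by norm_num) (intInt_base l _) (intInt_integrand l z hz)
  intro x hx
  simp only [Set.mem_Icc] at hx
  have hx2 : x ^ 2 ≤ 1 := by nlinarith [hx.1, hx.2]
  have hb : (0 : ℝ) ≤ (1 - x ^ 2) ^ l := pow_nonneg (by linarith) l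
  apply mul_le_mul_of_nonneg_left _ hb
  have h0 : (0 : ℝ) < x + z := by linarith [hx.1]
  exact inv_anti₀ (pow_pos h0 _) (pow_le_pow_left₀ h0.le (by linarith [hx.2]) _)

/-- For odd `ℓ`: (a) `z ↦ φ_ℓ(z)` is strictly increasing and negative on `(1, ∞)`;
(b) `|φ_ℓ(z)| ≤ 2^{−ℓ}(∫_{−1}^{1}(1−y²)^ℓ dy)/(z−1)^{ℓ+1}`;
(c) `(z−1)^{ℓ+1} φ_ℓ(z) → −2^{−ℓ}∫_{−1}^{1}(1−y²)^ℓ dy` as `z → +∞`. -/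
theorem phiL_odd_properties (l : ℕ) (hodd : Odd l) (hpos : 0 < l) :
    StrictMonoOn (phiL l) (Set.Ioi (1 : ℝ)) ∧
    (∀ z : ℝ, 1 < z → phiL l z < 0) ∧
    (∀ z : ℝ, 1 < z →
      |phiL l z| ≤ (1 / 2 ^ l) * (∫ y in (-1 : ℝ)..1, (1 - y ^ 2) ^ l) / (z - 1) ^ (l + 1)) ∧
    Filter.Tendsto (fun z : ℝ => (z - 1) ^ (l + 1) * phiL l z) Filter.atTop
      (nhds (-((1 / 2 ^ l) * ∫ y in (-1 : ℝ)..1, (1 - y ^ 2) ^ l))) := by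

  have hc : (0 : ℝ) < 1 / 2 ^ l := by positivity
  refine ⟨?_, ?_, ?_, ?_⟩
  · intro z₁ h₁ z₂ h₂ h₁₂
    simp only [Set.mem_Ioi] at h₁ h₂
    rw [phiL_eq l hodd z₁ h₁, phiL_eq l hodd z₂ h₂]
    have h := psi_lt l h₁ h₁₂
    nlinarith
  · intro z hz
    rw [phiL_eq l hodd z hz]
    have := psi_pos l hz
    nlinarith
  · intro z hz
    rw [phiL_eq l hodd z hz, abs_neg,
      abs_of_nonneg (by have := psi_pos l hz; positivity), mul_div_assoc, div_eq_mul_inv]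
    exact mul_le_mul_of_nonneg_left (psi_le l hz) hc.le
  · have hF : Filter.Tendsto
        (fun z : ℝ => (z - 1) ^ (l + 1) * ∫ y in (-1 : ℝ)..1, (1 - y ^ 2) ^ l * ((y + z) ^ (l + 1))⁻¹)
        Filter.atTop (nhds (∫ y in (-1 : ℝ)..1, (1 - y ^ 2) ^ l)) := by
      apply tendsto_of_tendsto_of_tendsto_of_le_of_le'
        (g := fun z : ℝ => (∫ y in (-1 : ℝ)..1, (1 - y ^ 2) ^ l) * ((z - 1) / (z + 1)) ^ (l + 1))
        (h := fun _ : ℝ => (∫ y in (-1 : ℝ)..1, (1 - y ^ 2) ^ l))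
      · have hq : Filter.Tendsto (fun z : ℝ => (z - 1) / (z + 1)) Filter.atTop (nhds 1) := by
          have h0 : Filter.Tendsto (fun z : ℝ => 2 / (z + 1)) Filter.atTop (nhds 0) :=
            Filter.Tendsto.div_atTop tendsto_const_nhds
              (Filter.tendsto_atTop_add_const_right _ 1 Filter.tendsto_id)
          have h1 := (tendsto_const_nhds (x := (1 : ℝ))).sub h0
          rw [sub_zero] at h1
          apply h1.congr'
          filter_upwards [Filter.eventually_gt_atTop (-1 : ℝ)] with z hz
          have : z + 1 ≠ 0 := by linarith
          field_simp
          ring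
        have h2 := (hq.pow (l + 1)).const_mul (∫ y in (-1 : ℝ)..1, (1 - y ^ 2) ^ l)
        simpa using h2
      · exact tendsto_const_nhds
      · filter_upwards [Filter.eventually_gt_atTop (1 : ℝ)] with z hz
        have hpg := psi_ge l hz
        have h1 : (0 : ℝ) < z - 1 := by linarith
        rw [div_pow, div_eq_mul_inv]
        calc (∫ y in (-1 : ℝ)..1, (1 - y ^ 2) ^ l) * ((z - 1) ^ (l + 1) * ((z + 1) ^ (l + 1))⁻¹)
            = (z - 1) ^ (l + 1) *
              ((∫ y in (-1 : ℝ)..1, (1 - y ^ 2) ^ l) * ((z + 1) ^ (l + 1))⁻¹) := by ring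
          _ ≤ _ := mul_le_mul_of_nonneg_left hpg (pow_pos h1 _).le
      · filter_upwards [Filter.eventually_gt_atTop (1 : ℝ)] with z hz
        have hpl := psi_le l hz
        have h1 : (0 : ℝ) < z - 1 := by linarith
        have h2 : ((z - 1) ^ (l + 1)) ≠ 0 := (pow_pos h1 _).ne'
        calc (z - 1) ^ (l + 1) * ∫ y in (-1 : ℝ)..1, (1 - y ^ 2) ^ l * ((y + z) ^ (l + 1))⁻¹
            ≤ (z - 1) ^ (l + 1) *
              ((∫ y in (-1 : ℝ)..1, (1 - y ^ 2) ^ l) * ((z - 1) ^ (l + 1))⁻¹) :=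
              mul_le_mul_of_nonneg_left hpl (pow_pos h1 _).le
          _ = _ := by field_simp
    have h3 := (hF.const_mul (1 / 2 ^ l : ℝ)).neg
    apply h3.congr'
    filter_upwards [Filter.eventually_gt_atTop (1 : ℝ)] with z hz
    rw [phiL_eq l hodd z hz]
    ring
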